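/- Let W ~ N(0, σ_w²) and B ~ N(0, σ_b²) be independent Gaussian random variables with σ_w, σ_b > 0, let C = −B/W, and define ζ(x) = E[W² | C = x] p_C(x). Then for all x ∈ ℝ, ζ(x) = 2 σ_w³ σ_b³ / (π (σ_b² + x² σ_w²)²). -/

import Mathlib

open Real MeasureTheory Set

lemma aux {b : ℝ} (hb : 0 < b) :
    ∫ w : ℝ, |w| ^ 3 * Real.exp (-b * w ^ 2) = (b ^ 2)⁻¹ := by
  have h1 : ∫ w : ℝ, |w| ^ 3 * Real.exp (-b * w ^ 2)
      = ∫ w : ℝ, (fun t : ℝ => t ^ 3 * Real.exp (-b * t ^ 2)) |w| := by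
    congr 1 with w
    simp [sq_abs]
  rw [h1, integral_comp_abs (f := fun t : ℝ => t ^ 3 * Real.exp (-b * t ^ 2))]
  have h2 : ∫ t in Ioi (0:ℝ), t ^ 3 * Real.exp (-b * t ^ 2)
      = ∫ t in Ioi (0:ℝ), t ^ (3:ℝ) * Real.exp (-b * t ^ (2:ℝ)) := by
    refine setIntegral_congr_fun measurableSet_Ioi (fun t ht => ?_)
    rw [show (3:ℝ) = ((3:ℕ):ℝ) by norm_num, show (2:ℝ) = ((2:ℕ):ℝ) by norm_num,
      rpow_natCast, rpow_natCast]
  rw [h2, integral_rpow_mul_exp_neg_mul_rpow (by norm_num) (by norm_num) hb]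
  rw [show (-(3+1)/2 : ℝ) = -2 by norm_num, show ((3+1)/2 : ℝ) = 2 by norm_num,
    Real.Gamma_two, rpow_neg hb.le, show (2:ℝ) = ((2:ℕ):ℝ) by norm_num, rpow_natCast]
  ring

/-- Explicit curvature penalty for independent Gaussian initialization
`W ~ N(0,σ_w²)`, `B ~ N(0,σ_b²)`:
`ζ(x) = ∫ |w|³ p_W(w) p_B(−wx) dw = 2σ_w³σ_b³ / (π(σ_b² + x²σ_w²)²)`. -/
theorem stmt5 (σw σb : ℝ) (hσw : 0 < σw) (hσb : 0 < σb) (x : ℝ) :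
    (∫ w : ℝ, |w| ^ 3
        * ((Real.sqrt (2 * Real.pi) * σw)⁻¹ * Real.exp (-(w ^ 2) / (2 * σw ^ 2)))
        * ((Real.sqrt (2 * Real.pi) * σb)⁻¹ * Real.exp (-((-(w * x)) ^ 2) / (2 * σb ^ 2))))
      = 2 * σw ^ 3 * σb ^ 3 / (Real.pi * (σb ^ 2 + x ^ 2 * σw ^ 2) ^ 2) := by
  set b : ℝ := 1 / (2 * σw ^ 2) + x ^ 2 / (2 * σb ^ 2) with hbdef
  have hb : 0 < b := by positivity
  have key : ∀ w : ℝ, |w| ^ 3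
        * ((Real.sqrt (2 * Real.pi) * σw)⁻¹ * Real.exp (-(w ^ 2) / (2 * σw ^ 2)))
        * ((Real.sqrt (2 * Real.pi) * σb)⁻¹ * Real.exp (-((-(w * x)) ^ 2) / (2 * σb ^ 2)))
      = ((Real.sqrt (2 * Real.pi) * σw)⁻¹ * (Real.sqrt (2 * Real.pi) * σb)⁻¹)
        * (|w| ^ 3 * Real.exp (-b * w ^ 2)) := by
    intro w
    have he : Real.exp (-(w ^ 2) / (2 * σw ^ 2)) * Real.exp (-((-(w * x)) ^ 2) / (2 * σb ^ 2))
        = Real.exp (-b * w ^ 2) := by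
      rw [← Real.exp_add]
      congr 1
      rw [hbdef]
      field_simp
      ring
    calc |w| ^ 3
        * ((Real.sqrt (2 * Real.pi) * σw)⁻¹ * Real.exp (-(w ^ 2) / (2 * σw ^ 2)))
        * ((Real.sqrt (2 * Real.pi) * σb)⁻¹ * Real.exp (-((-(w * x)) ^ 2) / (2 * σb ^ 2)))
        = ((Real.sqrt (2 * Real.pi) * σw)⁻¹ * (Real.sqrt (2 * Real.pi) * σb)⁻¹)
          * (|w| ^ 3 * (Real.exp (-(w ^ 2) / (2 * σw ^ 2))
            * Real.exp (-((-(w * x)) ^ 2) / (2 * σb ^ 2)))) := by ring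
      _ = _ := by rw [he]
  simp_rw [key]
  rw [integral_const_mul, aux hb]
  have hs : Real.sqrt (2 * Real.pi) ^ 2 = 2 * Real.pi := Real.sq_sqrt (by positivity)
  have hπ : 0 < Real.pi := Real.pi_pos
  have hss : 0 < Real.sqrt (2 * Real.pi) := Real.sqrt_pos.mpr (by positivity)
  have hsum : 0 < σb ^ 2 + x ^ 2 * σw ^ 2 := by positivity
  rw [hbdef]
  field_simp
  ring_nf
  rw [Real.sq_sqrt (by positivity : (0:ℝ) ≤ π * 2)]
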